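/- Pointwise monotonicity of the full-fill trajectory in the advertisement sequence: Let A, B : {1,…,N} → [0,1] be advertisement sequences with A_i ≤ B_i for every i, and fix an initial reputation R_1 ∈ [0,1]. Then the full-fill trajectories started from R_1 under A and under B satisfy R^A_i ≤ R^B_i, R'^A_i ≤ R'^B_i, and D(R'^A_i) ≤ D(R'^B_i) for every i = 1,…,N. -/

import Mathlib

set_option maxHeartbeats 1000000


noncomputable section

/-- Post-advertisement reputation map. -/
def frep (α R a : ℝ) : ℝ := R + (1 - R) * a ^ α

/-- Demand function. -/
def dem (Λ q x : ℝ) : ℝ := if 0 < x then max 0 (Λ * (1 - q / x)) else 0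

/-- Full-fill reputation trajectory (0-indexed periods). -/
def rep (α w Λ q : ℝ) (A : ℕ → ℝ) (R1 : ℝ) : ℕ → ℝ
  | 0 => R1
  | i + 1 =>
      let R' := frep α (rep α w Λ q A R1 i) (A i)
      if 0 < dem Λ q R' then (1 - w) * R' + w else R'

/-- Full-fill total profit over horizon `N`. -/
def profit (α w Λ q p c cA : ℝ) (A : ℕ → ℝ) (R1 : ℝ) (N : ℕ) : ℝ :=
  ∑ i ∈ Finset.range N,
    ((p - c) * dem Λ q (frep α (rep α w Λ q A R1 i) (A i)) - cA * A i)

lemma dem_mono' {Λ q x y : ℝ} (hΛ : 0 ≤ Λ) (hq : 0 ≤ q) (hxy : x ≤ y) :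
    dem Λ q x ≤ dem Λ q y := by
  unfold dem
  split_ifs with hx hy hy
  · apply max_le_max le_rfl
    have hy : 0 < y := lt_of_lt_of_le hx hxy
    have : q / y ≤ q / x := div_le_div_of_nonneg_left hq hx hxy
    nlinarith
  · exact absurd (lt_of_lt_of_le hx hxy) hy
  · exact le_max_left _ _
  · exact le_rfl

lemma frep_mono {α R S a b : ℝ} (hα : 0 < α) (hR0 : 0 ≤ R) (hS1 : S ≤ 1)
    (ha0 : 0 ≤ a) (hb1 : b ≤ 1) (hRS : R ≤ S) (hab : a ≤ b) :
    frep α R a ≤ frep α S b := by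
  unfold frep
  have hb0 : 0 ≤ b := le_trans ha0 hab
  have h1 : a ^ α ≤ b ^ α := Real.rpow_le_rpow ha0 hab hα.le
  have h2 : b ^ α ≤ 1 := Real.rpow_le_one hb0 hb1 hα.le
  have h3 : 0 ≤ a ^ α := Real.rpow_nonneg ha0 α
  nlinarith

lemma frep_mem {α R a : ℝ} (hα : 0 < α) (hR0 : 0 ≤ R) (hR1 : R ≤ 1)
    (ha0 : 0 ≤ a) (ha1 : a ≤ 1) : 0 ≤ frep α R a ∧ frep α R a ≤ 1 := by
  unfold frep
  have h2 : a ^ α ≤ 1 := Real.rpow_le_one ha0 ha1 hα.le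
  have h3 : 0 ≤ a ^ α := Real.rpow_nonneg ha0 α
  constructor <;> nlinarith

/-- Pointwise monotonicity of the full-fill trajectory in the advertisement
sequence: pointwise larger advertisement levels yield pointwise larger
reputations, post-advertisement reputations, and demands. -/
theorem full_fill_monotone_in_advertisement
    (Λ m u p α w R1 q : ℝ) (N : ℕ)
    (hΛ : 0 < Λ) (hm : 0 < m) (hu : 0 ≤ u) (hp : 0 < p)
    (hqdef : q = (u + p) / m) (hq1 : q < 1)
    (hα : 0 < α) (hw0 : 0 ≤ w) (hw1 : w ≤ 1)
    (A B : ℕ → ℝ)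
    (hA : ∀ i, 0 ≤ A i ∧ A i ≤ 1) (hB : ∀ i, 0 ≤ B i ∧ B i ≤ 1)
    (hAB : ∀ i, A i ≤ B i)
    (hR10 : 0 ≤ R1) (hR11 : R1 ≤ 1) :
    ∀ i, i + 1 ≤ N →
      rep α w Λ q A R1 i ≤ rep α w Λ q B R1 i ∧
      frep α (rep α w Λ q A R1 i) (A i) ≤ frep α (rep α w Λ q B R1 i) (B i) ∧
      dem Λ q (frep α (rep α w Λ q A R1 i) (A i)) ≤
        dem Λ q (frep α (rep α w Λ q B R1 i) (B i)) := by
  have hq0 : 0 ≤ q := by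
    rw [hqdef]; positivity
  have key : ∀ i, (0 ≤ rep α w Λ q A R1 i ∧ rep α w Λ q A R1 i ≤ 1) ∧
      (0 ≤ rep α w Λ q B R1 i ∧ rep α w Λ q B R1 i ≤ 1) ∧
      rep α w Λ q A R1 i ≤ rep α w Λ q B R1 i := by
    intro i
    induction i with
    | zero => exact ⟨⟨hR10, hR11⟩, ⟨hR10, hR11⟩, le_rfl⟩
    | succ i ih =>
      obtain ⟨⟨hA0, hA1⟩, ⟨hB0, hB1⟩, hle⟩ := ih
      have hfA := frep_mem (α := α) hα hA0 hA1 (hA i).1 (hA i).2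
      have hfB := frep_mem (α := α) hα hB0 hB1 (hB i).1 (hB i).2
      have hf : frep α (rep α w Λ q A R1 i) (A i) ≤
          frep α (rep α w Λ q B R1 i) (B i) :=
        frep_mono hα hA0 hB1 (hA i).1 (hB i).2 hle (hAB i)
      have hd : dem Λ q (frep α (rep α w Λ q A R1 i) (A i)) ≤
          dem Λ q (frep α (rep α w Λ q B R1 i) (B i)) :=
        dem_mono' hΛ.le hq0 hf
      set RA := frep α (rep α w Λ q A R1 i) (A i) with hRA
      set RB := frep α (rep α w Λ q B R1 i) (B i) with hRB
      have hstepA : rep α w Λ q A R1 (i+1) =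
          if 0 < dem Λ q RA then (1 - w) * RA + w else RA := by simp only [rep]; rfl
      have hstepB : rep α w Λ q B R1 (i+1) =
          if 0 < dem Λ q RB then (1 - w) * RB + w else RB := by simp only [rep]; rfl
      rw [hstepA, hstepB]
      split_ifs with h1 h2 h2
      · refine ⟨⟨by nlinarith [hfA.1, hfA.2], by nlinarith [hfA.2]⟩,
          ⟨by nlinarith [hfB.1, hfB.2], by nlinarith [hfB.2]⟩, by nlinarith⟩
      · exact absurd (lt_of_lt_of_le h1 hd) h2
      · exact ⟨⟨hfA.1, hfA.2⟩,
          ⟨by nlinarith [hfB.1, hfB.2], by nlinarith [hfB.2]⟩,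
          by nlinarith [hfB.2]⟩
      · exact ⟨⟨hfA.1, hfA.2⟩, ⟨hfB.1, hfB.2⟩, hf⟩
  intro i _
  obtain ⟨⟨hA0, hA1⟩, ⟨hB0, hB1⟩, hle⟩ := key i
  have hf : frep α (rep α w Λ q A R1 i) (A i) ≤
      frep α (rep α w Λ q B R1 i) (B i) :=
    frep_mono hα hA0 hB1 (hA i).1 (hB i).2 hle (hAB i)
  exact ⟨hle, hf, dem_mono' hΛ.le hq0 hf⟩
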